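/- With the setup of the red-green map: for vectors x, y with 0 ≤ xᵢ ≤ mᵢ, 0 ≤ yᵢ ≤ mᵢ, not both zero, and h(x), h(y) the first index n such that rₙ lands in x_green, y_green respectively (rₙ i.i.d. Uniform([0, M_D])), we have P(h(x) = h(y)) = (∑ i min(xᵢ, yᵢ)) / (∑ i max(xᵢ, yᵢ)), i.e., the generalized Jaccard similarity. -/

import Mathlib

open MeasureTheory Set
open scoped ProbabilityTheory

theorem stmt_4 {Ω : Type*} [MeasureSpace Ω] [IsProbabilityMeasure (ℙ : Measure Ω)]
    (D : ℕ) (m x y : Fin D → ℝ) (hm : ∀ i, 0 < m i)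
    (M : Fin (D + 1) → ℝ) (hM0 : M 0 = 0)
    (hMsucc : ∀ i : Fin D, M i.succ = M i.castSucc + m i)
    (hx0 : ∀ i, 0 ≤ x i) (hy0 : ∀ i, 0 ≤ y i)
    (hxm : ∀ i, x i ≤ m i) (hym : ∀ i, y i ≤ m i)
    (hxpos : 0 < ∑ i, x i) (hypos : 0 < ∑ i, y i)
    (r : ℕ → Ω → ℝ)
    (hrmeas : ∀ n, Measurable (r n))
    (hrunif : ∀ n, Measure.map (r n) ℙ
      = (ENNReal.ofReal (M (Fin.last D)))⁻¹ • volume.restrict (Icc (0 : ℝ) (M (Fin.last D))))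
    (hindep : ProbabilityTheory.iIndepFun r ℙ) :
    ℙ {ω | sInf {n | r n ω ∈ ⋃ i : Fin D, Icc (M i.castSucc) (M i.castSucc + x i)}
          = sInf {n | r n ω ∈ ⋃ i : Fin D, Icc (M i.castSucc) (M i.castSucc + y i)}}
      = ENNReal.ofReal ((∑ i, min (x i) (y i)) / (∑ i, max (x i) (y i))) := by
  classical
  set T := M (Fin.last D) with hTdef
  -- monotonicity of M
  have hMmono : StrictMono M := by
    rw [Fin.strictMono_iff_lt_succ]
    intro i; rw [hMsucc i]; linarith [hm i]
  have hMnonneg : ∀ k : Fin (D + 1), 0 ≤ M k := by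
    intro k
    have := hMmono.monotone (Fin.zero_le k)
    rwa [hM0] at this
  have hMleT : ∀ i : Fin D, M i.castSucc + m i ≤ T := by
    intro i
    rw [← hMsucc i]; exact hMmono.monotone (Fin.le_last _)
  obtain ⟨i₀, hi₀⟩ : ∃ i, 0 < x i := by
    by_contra h; push_neg at h
    exact absurd (Finset.sum_nonpos fun i _ => h i) (not_le.2 hxpos)
  have hTpos : 0 < T := lt_of_lt_of_le (by linarith [hMnonneg i₀.castSucc, hm i₀]) (hMleT i₀)
  -- the green sets
  set A : Set ℝ := ⋃ i : Fin D, Icc (M i.castSucc) (M i.castSucc + x i) with hA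
  set B : Set ℝ := ⋃ i : Fin D, Icc (M i.castSucc) (M i.castSucc + y i) with hB
  set U : Set ℝ := A ∪ B with hU
  set I : Set ℝ := A ∩ B with hI
  have hmeasA : MeasurableSet A := MeasurableSet.iUnion fun i => measurableSet_Icc
  have hmeasB : MeasurableSet B := MeasurableSet.iUnion fun i => measurableSet_Icc
  have hmeasU : MeasurableSet U := hmeasA.union hmeasB
  have hmeasI : MeasurableSet I := hmeasA.inter hmeasB
  -- generic volume computation
  have hsub : ∀ z : Fin D → ℝ, (∀ i, z i ≤ m i) →
      (⋃ i : Fin D, Icc (M i.castSucc) (M i.castSucc + z i)) ⊆ Icc 0 T := by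
    intro z hzm
    refine iUnion_subset fun i => Icc_subset_Icc (hMnonneg _) ?_
    have := hMleT i; linarith [hzm i]
  have hvol : ∀ z : Fin D → ℝ, (∀ i, 0 ≤ z i) → (∀ i, z i ≤ m i) →
      volume (⋃ i : Fin D, Icc (M i.castSucc) (M i.castSucc + z i))
        = ENNReal.ofReal (∑ i, z i) := by
    intro z hz0 hzm
    have key : ∀ i j : Fin D, i < j →
        volume (Icc (M i.castSucc) (M i.castSucc + z i)
          ∩ Icc (M j.castSucc) (M j.castSucc + z j)) = 0 := by
      intro i j hij
      have hle : M i.castSucc + z i ≤ M j.castSucc := by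
        have h1 : M i.castSucc + z i ≤ M i.succ := by rw [hMsucc i]; linarith [hzm i]
        have h2 : M i.succ ≤ M j.castSucc :=
          hMmono.monotone (by rwa [Fin.succ_le_castSucc_iff])
        linarith
      refine measure_mono_null (fun t ht => ?_) (by
        rw [Real.volume_Icc, ENNReal.ofReal_eq_zero]; linarith :
          volume (Icc (M j.castSucc) (M i.castSucc + z i)) = 0)
      exact ⟨ht.2.1, ht.1.2⟩
    rw [measure_iUnion₀ ?_ fun i => measurableSet_Icc.nullMeasurableSet]
    · rw [tsum_fintype]
      have hic : ∀ i : Fin D, volume (Icc (M i.castSucc) (M i.castSucc + z i))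
          = ENNReal.ofReal (z i) := fun i => by rw [Real.volume_Icc]; ring_nf
      simp_rw [hic]
      rw [← ENNReal.ofReal_sum_of_nonneg (fun i _ => hz0 i)]
    · intro i j hij
      rcases hij.lt_or_gt with h | h
      · exact key i j h
      · exact MeasureTheory.AEDisjoint.symm (key j i h)
  -- volumes
  have hvolA : volume A = ENNReal.ofReal (∑ i, x i) := hvol x hx0 hxm
  have hvolB : volume B = ENNReal.ofReal (∑ i, y i) := hvol y hy0 hym
  have hmax0 : ∀ i, 0 ≤ max (x i) (y i) := fun i => le_trans (hx0 i) (le_max_left _ _)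
  have hmaxm : ∀ i, max (x i) (y i) ≤ m i := fun i => max_le (hxm i) (hym i)
  have hUeq : U = ⋃ i : Fin D, Icc (M i.castSucc) (M i.castSucc + max (x i) (y i)) := by
    rw [hU, hA, hB, ← iUnion_union_distrib]
    refine iUnion_congr fun i => ?_
    ext t
    simp only [Set.mem_union, mem_Icc]
    constructor
    · rintro (⟨h1, h2⟩ | ⟨h1, h2⟩)
      · exact ⟨h1, le_trans h2 (by linarith [le_max_left (x i) (y i)])⟩
      · exact ⟨h1, le_trans h2 (by linarith [le_max_right (x i) (y i)])⟩
    · rintro ⟨h1, h2⟩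
      rcases max_cases (x i) (y i) with ⟨he, _⟩ | ⟨he, _⟩
      · left; exact ⟨h1, by rw [he] at h2; linarith⟩
      · right; exact ⟨h1, by rw [he] at h2; linarith⟩
  have hvolU : volume U = ENNReal.ofReal (∑ i, max (x i) (y i)) := by
    rw [hUeq]; exact hvol _ hmax0 hmaxm
  have hsumMaxpos : 0 < ∑ i, max (x i) (y i) :=
    lt_of_lt_of_le hxpos (Finset.sum_le_sum fun i _ => le_max_left _ _)
  have hsumMin0 : 0 ≤ ∑ i, min (x i) (y i) :=
    Finset.sum_nonneg fun i _ => le_min (hx0 i) (hy0 i)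
  have hvolI : volume I = ENNReal.ofReal (∑ i, min (x i) (y i)) := by
    have h1 : volume (A ∪ B) + volume (A ∩ B) = volume A + volume B :=
      measure_union_add_inter A hmeasB
    rw [← hU, ← hI, hvolU, hvolA, hvolB, ← ENNReal.ofReal_add
      (Finset.sum_nonneg fun i _ => hx0 i) (Finset.sum_nonneg fun i _ => hy0 i)] at h1
    have h2 : ∑ i, x i + ∑ i, y i = (∑ i, max (x i) (y i)) + ∑ i, min (x i) (y i) := by
      rw [← Finset.sum_add_distrib, ← Finset.sum_add_distrib]
      exact Finset.sum_congr rfl fun i _ => by rw [max_add_min]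
    rw [h2, ENNReal.ofReal_add (le_of_lt hsumMaxpos) hsumMin0] at h1
    exact (ENNReal.add_right_inj ENNReal.ofReal_ne_top).1 h1
  -- per-trial probabilities
  have hprob : ∀ (n : ℕ) (S : Set ℝ), MeasurableSet S → S ⊆ Icc 0 T →
      ℙ (r n ⁻¹' S) = (ENNReal.ofReal T)⁻¹ * volume S := by
    intro n S hS hSsub
    rw [← Measure.map_apply (hrmeas n) hS, hrunif n, Measure.smul_apply, smul_eq_mul,
      Measure.restrict_apply hS, inter_eq_self_of_subset_left hSsub]
  have hofdiv : ∀ c : ℝ, (ENNReal.ofReal T)⁻¹ * ENNReal.ofReal c = ENNReal.ofReal (c / T) := by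
    intro c
    rw [ENNReal.ofReal_div_of_pos hTpos, div_eq_mul_inv, mul_comm]
  have hUsub : U ⊆ Icc 0 T := by rw [hUeq]; exact hsub _ hmaxm
  have hIsub : I ⊆ Icc 0 T := fun t ht => hUsub (Or.inl ht.1)
  have hAsub : A ⊆ Icc 0 T := hsub _ hxm
  have hprobU : ∀ n, ℙ (r n ⁻¹' U) = ENNReal.ofReal ((∑ i, max (x i) (y i)) / T) := fun n => by
    rw [hprob n U hmeasU hUsub, hvolU, hofdiv]
  have hprobI : ∀ n, ℙ (r n ⁻¹' I) = ENNReal.ofReal ((∑ i, min (x i) (y i)) / T) := fun n => by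
    rw [hprob n I hmeasI hIsub, hvolI, hofdiv]
  have hprobA : ∀ n, ℙ (r n ⁻¹' A) = ENNReal.ofReal ((∑ i, x i) / T) := fun n => by
    rw [hprob n A hmeasA hAsub, hvolA, hofdiv]
  have hBsub : B ⊆ Icc 0 T := hsub _ hym
  have hprobB : ∀ n, ℙ (r n ⁻¹' B) = ENNReal.ofReal ((∑ i, y i) / T) := fun n => by
    rw [hprob n B hmeasB hBsub, hvolB, hofdiv]
  have hsumMaxleT : ∑ i, max (x i) (y i) ≤ T := by
    have h := measure_mono (μ := volume) hUsub
    rw [hvolU, Real.volume_Icc, sub_zero] at h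
    exact (ENNReal.ofReal_le_ofReal_iff (le_of_lt hTpos)).1 h
  set q : ENNReal := ENNReal.ofReal ((∑ i, max (x i) (y i)) / T) with hqdef
  set p : ENNReal := ENNReal.ofReal ((∑ i, min (x i) (y i)) / T) with hpdef
  have hqle1 : q ≤ 1 := ENNReal.ofReal_le_one.2 ((div_le_one hTpos).2 hsumMaxleT)
  -- the collision events
  set G : ℕ → Set Ω := fun n => (⋂ k ∈ Finset.range n, r k ⁻¹' Uᶜ) ∩ r n ⁻¹' I with hGdef
  have hGmeas : ∀ n, MeasurableSet (G n) := fun n =>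
    (MeasurableSet.iInter fun k => MeasurableSet.iInter fun _ =>
      (hrmeas k) hmeasU.compl).inter ((hrmeas n) hmeasI)
  have hGeq : ∀ n, G n = ⋂ k ∈ Finset.range (n + 1), r k ⁻¹' (if k = n then I else Uᶜ) := by
    intro n
    ext ω
    simp only [hGdef, Set.mem_inter_iff, Set.mem_iInter, Finset.mem_range, Set.mem_preimage]
    constructor
    · rintro ⟨h1, h2⟩ k hk
      rcases eq_or_lt_of_le (Nat.lt_succ_iff.1 hk) with rfl | hlt
      · simpa using h2
      · simpa [Nat.ne_of_lt hlt] using h1 k hlt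
    · intro h
      refine ⟨fun k hk => ?_, ?_⟩
      · have := h k (by omega); simpa [Nat.ne_of_lt hk] using this
      · have := h n (by omega); simpa using this
  have hGprob : ∀ n, ℙ (G n) = (1 - q) ^ n * p := by
    intro n
    rw [hGeq n, hindep.measure_inter_preimage_eq_mul (Finset.range (n + 1))
      (sets := fun k => if k = n then I else Uᶜ)
      (fun k _ => by split <;> [exact hmeasI; exact hmeasU.compl]),
      Finset.prod_range_succ, if_pos rfl]
    have hrest : ∀ k ∈ Finset.range n, ℙ (r k ⁻¹' (if k = n then I else Uᶜ)) = 1 - q := by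
      intro k hk
      rw [if_neg (Nat.ne_of_lt (Finset.mem_range.1 hk)), Set.preimage_compl,
        prob_compl_eq_one_sub ((hrmeas k) hmeasU), hprobU k]
    rw [Finset.prod_congr rfl hrest, Finset.prod_const, Finset.card_range, hprobI]
  have hGdisj : Pairwise (Function.onFun Disjoint G) := by
    have key : ∀ n n', n < n' → Disjoint (G n) (G n') := by
      intro n n' h
      refine Set.disjoint_left.2 fun ω hω hω' => ?_
      have h1 : r n ω ∈ I := hω.2
      have h2 : r n ω ∉ U := Set.mem_iInter₂.1 hω'.1 n (Finset.mem_range.2 h)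
      exact h2 (Or.inl h1.1)
    intro n n' hne
    rcases hne.lt_or_gt with h | h
    · exact key n n' h
    · exact (key n' n h).symm
  -- almost surely some trial hits any fixed positive-measure set
  have hnever : ∀ (S : Set ℝ) (v : ENNReal), MeasurableSet S →
      (∀ k, ℙ (r k ⁻¹' S) = v) → v ≠ 0 → ℙ (⋂ k, r k ⁻¹' Sᶜ) = 0 := by
    intro S v hS hv hv0
    have hbound : ∀ K : ℕ, ℙ (⋂ k, r k ⁻¹' Sᶜ) ≤ (1 - v) ^ K := by
      intro K
      have hsub2 : (⋂ k, r k ⁻¹' Sᶜ) ⊆ ⋂ k ∈ Finset.range K, r k ⁻¹' Sᶜ :=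
        fun ω hω => Set.mem_iInter₂.2 fun k _ => Set.mem_iInter.1 hω k
      refine le_trans (measure_mono hsub2) ?_
      rw [hindep.measure_inter_preimage_eq_mul (Finset.range K) (sets := fun _ => Sᶜ)
        (fun k _ => hS.compl)]
      have hrest : ∀ k ∈ Finset.range K, ℙ (r k ⁻¹' Sᶜ) = 1 - v := by
        intro k _
        rw [Set.preimage_compl, prob_compl_eq_one_sub ((hrmeas k) hS), hv k]
      rw [Finset.prod_congr rfl hrest, Finset.prod_const, Finset.card_range]
    have hlt1 : (1 : ENNReal) - v < 1 := ENNReal.sub_lt_self ENNReal.one_ne_top one_ne_zero hv0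
    exact le_zero_iff.1 (ge_of_tendsto'
      (ENNReal.tendsto_pow_atTop_nhds_zero_of_lt_one hlt1) hbound)
  have hNA : ℙ (⋂ k, r k ⁻¹' Aᶜ) = 0 :=
    hnever A _ hmeasA hprobA (by
      simp only [ne_eq, ENNReal.ofReal_eq_zero, not_le]
      exact div_pos hxpos hTpos)
  have hNB : ℙ (⋂ k, r k ⁻¹' Bᶜ) = 0 :=
    hnever B _ hmeasB hprobB (by
      simp only [ne_eq, ENNReal.ofReal_eq_zero, not_le]
      exact div_pos hypos hTpos)
  -- identify the event with the disjoint union, up to null sets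
  have hsInf_eq : ∀ (s : Set ℕ) (n : ℕ), n ∈ s → (∀ k < n, k ∉ s) → sInf s = n :=
    fun s n hn h => le_antisymm (Nat.sInf_le hn)
      (le_csInf ⟨n, hn⟩ fun k hk => not_lt.1 fun h' => h k h' hk)
  have hGsubE : (⋃ n, G n) ⊆ {ω | sInf {n | r n ω ∈ A} = sInf {n | r n ω ∈ B}} := by
    intro ω hω
    obtain ⟨n, hn⟩ := Set.mem_iUnion.1 hω
    obtain ⟨h1, h2⟩ := hn
    have hka : ∀ k < n, r k ω ∉ A := fun k hk hA' =>
      Set.mem_iInter₂.1 h1 k (Finset.mem_range.2 hk) (Or.inl hA')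
    have hkb : ∀ k < n, r k ω ∉ B := fun k hk hB' =>
      Set.mem_iInter₂.1 h1 k (Finset.mem_range.2 hk) (Or.inr hB')
    show sInf {k | r k ω ∈ A} = sInf {k | r k ω ∈ B}
    rw [hsInf_eq {k | r k ω ∈ A} n h2.1 hka, hsInf_eq {k | r k ω ∈ B} n h2.2 hkb]
  have hEG : ℙ {ω | sInf {n | r n ω ∈ A} = sInf {n | r n ω ∈ B}} = ℙ (⋃ n, G n) := by
    apply measure_congr
    rw [MeasureTheory.ae_eq_set]
    constructor
    · refine measure_mono_null ?_ (measure_union_null hNA hNB)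
      intro ω hω
      obtain ⟨hE, hnG⟩ := hω
      rw [Set.mem_union]
      by_contra hN
      push_neg at hN
      obtain ⟨hNA', hNB'⟩ := hN
      have hxne : {k | r k ω ∈ A}.Nonempty := by
        by_contra h
        rw [Set.not_nonempty_iff_eq_empty] at h
        exact hNA' (Set.mem_iInter.2 fun k =>
          (Set.eq_empty_iff_forall_notMem.1 h k : r k ω ∉ A))
      have hyne : {k | r k ω ∈ B}.Nonempty := by
        by_contra h
        rw [Set.not_nonempty_iff_eq_empty] at h
        exact hNB' (Set.mem_iInter.2 fun k =>
          (Set.eq_empty_iff_forall_notMem.1 h k : r k ω ∉ B))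
      have hE' : sInf {k | r k ω ∈ A} = sInf {k | r k ω ∈ B} := hE
      have hmemA : r (sInf {k | r k ω ∈ A}) ω ∈ A := Nat.sInf_mem hxne
      have hmemB : r (sInf {k | r k ω ∈ A}) ω ∈ B := by
        have h' := Nat.sInf_mem hyne
        rw [← hE'] at h'
        exact h'
      apply hnG
      refine Set.mem_iUnion.2 ⟨sInf {k | r k ω ∈ A}, ?_, ⟨hmemA, hmemB⟩⟩
      refine Set.mem_iInter₂.2 fun k hk hU' => ?_
      rcases hU' with hA' | hB'
      · exact Nat.notMem_of_lt_sInf (Finset.mem_range.1 hk) hA'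
      · exact Nat.notMem_of_lt_sInf
          (show k < sInf {k | r k ω ∈ B} from hE' ▸ Finset.mem_range.1 hk) hB'
    · rw [Set.diff_eq_empty.2 hGsubE]
      exact measure_empty
  -- put everything together
  rw [hEG, measure_iUnion hGdisj hGmeas]
  simp_rw [hGprob]
  rw [ENNReal.tsum_mul_right, ENNReal.tsum_geometric, ENNReal.sub_sub_cancel ENNReal.one_ne_top hqle1]
  rw [hqdef, hpdef, mul_comm, ← div_eq_mul_inv,
    ← ENNReal.ofReal_div_of_pos (div_pos hsumMaxpos hTpos)]
  congr 1
  have hT0 : T ≠ 0 := ne_of_gt hTpos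
  have hc0 : (∑ i, max (x i) (y i)) ≠ 0 := ne_of_gt hsumMaxpos
  field_simp
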